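/- Let L be a unimodular lattice (a free finitely generated ℤ-module with a unimodular symmetric bilinear form) and σ : L → L an isometric involution. Then (1-σ)L = { v ∈ L⁻ | v·L⁻ ⊆ 2ℤ }, where L⁻ = ker(1+σ). -/

import Mathlib

/-- Over a PID, a linear functional on the kernel of an endomorphism of a
finite free module extends to the whole module. -/
theorem aux_extend {R M : Type*} [CommRing R] [IsDomain R] [IsPrincipalIdealRing R]
    [AddCommGroup M] [Module R M] [Module.Free R M] [Module.Finite R M]
    (f : M →ₗ[R] M) (ψ : LinearMap.ker f →ₗ[R] R) :
    ∃ Ψ : M →ₗ[R] R, ∀ u : LinearMap.ker f, Ψ (u : M) = ψ u := by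
  haveI : Module.IsTorsionFree R M := inferInstance
  haveI : Module.Free R (M ⧸ LinearMap.ker f) :=
    Module.Free.of_equiv (f.quotKerEquivRange).symm
  obtain ⟨s, hs⟩ := Module.projective_lifting_property (LinearMap.ker f).mkQ
    (LinearMap.id : (M ⧸ LinearMap.ker f) →ₗ[R] (M ⧸ LinearMap.ker f))
    (LinearMap.ker f).mkQ_surjective
  have hrmem : ∀ x : M, x - s ((LinearMap.ker f).mkQ x) ∈ LinearMap.ker f := by
    intro x
    rw [← Submodule.Quotient.mk_eq_zero, ← Submodule.mkQ_apply, map_sub]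
    have : (LinearMap.ker f).mkQ (s ((LinearMap.ker f).mkQ x))
        = (LinearMap.ker f).mkQ x := by
      have := congrArg (fun g => g ((LinearMap.ker f).mkQ x)) hs
      simpa using this
    rw [this, sub_self]
  refine ⟨ψ ∘ₗ LinearMap.codRestrict (LinearMap.ker f)
    (LinearMap.id - s ∘ₗ (LinearMap.ker f).mkQ) hrmem, ?_⟩
  intro u
  have hu0 : (LinearMap.ker f).mkQ (u : M) = 0 := by
    rw [Submodule.mkQ_apply, Submodule.Quotient.mk_eq_zero]; exact u.2
  have h1 : (LinearMap.codRestrict (LinearMap.ker f)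
      (LinearMap.id - s ∘ₗ (LinearMap.ker f).mkQ) hrmem) (u : M) = u := by
    apply Subtype.ext
    simp [hu0]
  simp only [LinearMap.comp_apply, h1]

/-- Generic version of the reverse implication over a PID in which `2 ≠ 0`. -/
theorem stmt2_aux {R M : Type*} [CommRing R] [IsDomain R] [IsPrincipalIdealRing R]
    [AddCommGroup M] [Module R M] [Module.Free R M] [Module.Finite R M]
    (b : M →ₗ[R] M →ₗ[R] R)
    (hunimod : Function.Bijective (fun v : M => b v))
    (σ : M →ₗ[R] M) (hinv : ∀ x, σ (σ x) = x)
    (hisom : ∀ x y, b (σ x) (σ y) = b x y)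
    (h2 : (2 : R) ≠ 0)
    (v : M) (hv : σ v = -v) (hdiv : ∀ u, σ u = -u → (2 : R) ∣ b v u) :
    ∃ x, v = x - σ x := by
  have key : ∀ x y, b (σ x) y = b x (σ y) := by
    intro x y
    conv_lhs => rw [← hinv y]
    exact hisom x (σ y)
  have memN : ∀ u : M, u ∈ LinearMap.ker (LinearMap.id + σ) ↔ σ u = -u := by
    intro u
    simp only [LinearMap.mem_ker, LinearMap.add_apply, LinearMap.id_apply]
    constructor <;> intro h <;> linear_combination (norm := abel) h
  -- half of `b v u` for `u` in the kernel
  have hev : ∀ u : LinearMap.ker (LinearMap.id + σ), ∃ c : R, b v (u : M) = 2 * c :=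
    fun u => hdiv u ((memN u).1 u.2)
  choose half hhalf using hev
  have huniq : ∀ (u : LinearMap.ker (LinearMap.id + σ)) (c : R),
      b v (u : M) = 2 * c → half u = c := by
    intro u c hc
    have := (hhalf u).symm.trans hc
    exact mul_left_cancel₀ h2 this
  let ψ : LinearMap.ker (LinearMap.id + σ) →ₗ[R] R :=
    { toFun := half
      map_add' := by
        intro u w
        apply huniq
        rw [Submodule.coe_add, map_add, hhalf u, hhalf w]; ring
      map_smul' := by
        intro c u
        apply huniq
        have hcc : ((c • u : LinearMap.ker (LinearMap.id + σ)) : M) = c • (u : M) := rfl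
        rw [hcc, map_smul, smul_eq_mul, hhalf u, RingHom.id_apply, smul_eq_mul]; ring }
  obtain ⟨Ψ, hΨ⟩ := aux_extend (LinearMap.id + σ) ψ
  obtain ⟨x, hx⟩ := hunimod.2 Ψ
  refine ⟨x, ?_⟩
  have hbeq : b (x - σ x - v) = b (0 : M) := by
    ext y
    have hbx : b x = Ψ := hx
    have hsyN : y - σ y ∈ LinearMap.ker ((LinearMap.id : M →ₗ[R] M) + σ) := by
      rw [memN]
      simp only [map_sub, hinv]; abel
    have hbvσ : b v (σ y) = - b v y := by
      rw [← key v y, hv, map_neg, LinearMap.neg_apply]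
    have hbv2 : b v (y - σ y) = 2 * b v y := by
      rw [map_sub, hbvσ]; ring
    have hψval : Ψ (y - σ y) = b v y := by
      have h := hΨ ⟨y - σ y, hsyN⟩
      rw [h]
      exact huniq ⟨y - σ y, hsyN⟩ (b v y) hbv2
    have hΨdiff : Ψ y - Ψ (σ y) = b v y := by
      rw [← map_sub, hψval]
    have hbσx : b (σ x) y = b x (σ y) := key x y
    simp only [map_sub, LinearMap.sub_apply, LinearMap.zero_apply, map_zero, hbσx, hbx]
    rw [hΨdiff]
    ring
  have h0 := hunimod.1 hbeq
  rw [sub_eq_zero] at h0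
  exact h0.symm

/-- for a unimodular lattice `L` with an isometric involution `σ`,
`(1-σ)L = { v ∈ ker(1+σ) | v·ker(1+σ) ⊆ 2ℤ }`. -/
theorem stmt_2 (L : Type*) [AddCommGroup L] [Module ℤ L]
    [Module.Free ℤ L] [Module.Finite ℤ L]
    (b : L →ₗ[ℤ] L →ₗ[ℤ] ℤ) (hsymm : ∀ x y, b x y = b y x)
    (hunimod : Function.Bijective (fun v : L => b v))
    (σ : L →ₗ[ℤ] L) (hinv : ∀ x, σ (σ x) = x)
    (hisom : ∀ x y, b (σ x) (σ y) = b x y) :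
    ∀ v : L, (∃ x, v = x - σ x) ↔ (σ v = -v ∧ ∀ u, σ u = -u → (2 : ℤ) ∣ b v u) := by
  have key : ∀ x y, b (σ x) y = b x (σ y) := by
    intro x y
    conv_lhs => rw [← hinv y]
    exact hisom x (σ y)
  intro v
  constructor
  · rintro ⟨x, rfl⟩
    constructor
    · simp only [map_sub, hinv]; abel
    · intro u hu
      refine ⟨b x u, ?_⟩
      have h1 : b (σ x) u = - b x u := by
        rw [key x u, hu, map_neg]
      simp only [map_sub, LinearMap.sub_apply, h1]
      ring
  · rintro ⟨hv, hdiv⟩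
    exact stmt2_aux b hunimod σ hinv hisom (by norm_num) v hv hdiv
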